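/- arXiv:1910.07105 — 3 statements merged into one kernel-verified Lean document; each statement's English description precedes it below -/
import Mathlib

section
/- Let 0 < |j| < 1 and ν < 0. The equation 1 − i μ_ν = 0, with μ_ν = k^{2|j|} Γ(1−|j|) sin(|j|π) / (4^{|j|} Γ(1+|j|) ν + k^{2|j|} Γ(1−|j|) cos(|j|π)) evaluated at k = i κ_b (κ_b > 0, using (iκ_b)^{2|j|} = κ_b^{2|j|} e^{i|j|π}), holds if and only if κ_b^{2|j|} = −4^{|j|} ν Γ(1+|j|)/Γ(1−|j|); equivalently the bound state energy E_b = −κ_b²/(2M) equals −(2/M)[−ν Γ(1+|j|)/Γ(1−|j|)]^{1/|j|}. -/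
open Complex Real

theorem stmt_9 (j ν κ M : ℝ) (hj0 : 0 < |j|) (hj : |j| < 1) (hν : ν < 0)
    (hκ : 0 < κ) (hM : 0 < M)
    (hden : ((4 ^ |j| * Real.Gamma (1 + |j|) * ν : ℝ) : ℂ)
        + ((κ ^ (2 * |j|) : ℝ) : ℂ) * Complex.exp (|j| * π * I)
          * ((Real.Gamma (1 - |j|) : ℝ) : ℂ) * ((Real.cos (|j| * π) : ℝ) : ℂ) ≠ 0) :
    ((1 - I * (((κ ^ (2 * |j|) : ℝ) : ℂ) * Complex.exp (|j| * π * I)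
          * ((Real.Gamma (1 - |j|) : ℝ) : ℂ) * ((Real.sin (|j| * π) : ℝ) : ℂ)
        / (((4 ^ |j| * Real.Gamma (1 + |j|) * ν : ℝ) : ℂ)
          + ((κ ^ (2 * |j|) : ℝ) : ℂ) * Complex.exp (|j| * π * I)
            * ((Real.Gamma (1 - |j|) : ℝ) : ℂ) * ((Real.cos (|j| * π) : ℝ) : ℂ))) = 0)
      ↔ κ ^ (2 * |j|) = -(4 ^ |j|) * ν * Real.Gamma (1 + |j|) / Real.Gamma (1 - |j|)) ∧
    ((κ ^ (2 * |j|) = -(4 ^ |j|) * ν * Real.Gamma (1 + |j|) / Real.Gamma (1 - |j|))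
      ↔ -κ ^ 2 / (2 * M)
          = -(2 / M) * (-ν * Real.Gamma (1 + |j|) / Real.Gamma (1 - |j|)) ^ (1 / |j|)) := by
  set a := |j| with ha
  have ha0 : (0:ℝ) < a := hj0
  have hG1 : 0 < Real.Gamma (1 - a) := Real.Gamma_pos_of_pos (by linarith)
  have hG2 : 0 < Real.Gamma (1 + a) := Real.Gamma_pos_of_pos (by linarith)
  have hE : Complex.exp (↑a * ↑π * I) *
      (Complex.cos (↑a * ↑π) - Complex.sin (↑a * ↑π) * I) = 1 := by
    rw [Complex.exp_mul_I]
    linear_combination Complex.cos_sq_add_sin_sq ((a:ℂ) * ↑π)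
      - Complex.sin ((a:ℂ) * ↑π) ^ 2 * Complex.I_sq
  constructor
  · rw [sub_eq_zero, eq_comm, mul_div_assoc', div_eq_one_iff_eq hden, ← sub_eq_zero]
    have heq : (I * (((κ ^ (2 * a) : ℝ) : ℂ) * Complex.exp (↑a * ↑π * I)
          * ((Real.Gamma (1 - a) : ℝ) : ℂ) * ((Real.sin (a * π) : ℝ) : ℂ)))
        - (((4 ^ a * Real.Gamma (1 + a) * ν : ℝ) : ℂ)
          + ((κ ^ (2 * a) : ℝ) : ℂ) * Complex.exp (↑a * ↑π * I)
            * ((Real.Gamma (1 - a) : ℝ) : ℂ) * ((Real.cos (a * π) : ℝ) : ℂ))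
        = -(((κ ^ (2 * a) * Real.Gamma (1 - a) + 4 ^ a * Real.Gamma (1 + a) * ν : ℝ)) : ℂ) := by
      push_cast
      linear_combination (-((κ ^ (2*a) : ℝ) : ℂ) * ((Real.Gamma (1-a) : ℝ) : ℂ)) * hE
    rw [heq, neg_eq_zero, Complex.ofReal_eq_zero]
    constructor
    · intro h
      field_simp
      linarith
    · intro h
      rw [h]
      field_simp
      ring
  · have hP : (0:ℝ) < -ν * Real.Gamma (1 + a) / Real.Gamma (1 - a) :=
      div_pos (mul_pos (neg_pos.2 hν) hG2) hG1
    have hrw : -(4 ^ a) * ν * Real.Gamma (1 + a) / Real.Gamma (1 - a)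
        = 4 ^ a * (-ν * Real.Gamma (1 + a) / Real.Gamma (1 - a)) := by ring
    rw [hrw]
    set P := -ν * Real.Gamma (1 + a) / Real.Gamma (1 - a) with hPdef
    have h4 : (0:ℝ) < (4:ℝ) ^ a := Real.rpow_pos_of_pos (by norm_num) a
    have hane : a ≠ 0 := ne_of_gt ha0
    have hk2 : κ ^ (2 * a) = ((κ ^ 2 : ℝ)) ^ a := by
      rw [← Real.rpow_natCast κ 2, ← Real.rpow_mul hκ.le]
      norm_num
    constructor
    · intro h
      have h2 : κ ^ 2 = 4 * P ^ (1/a) := by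
        have h' := congrArg (fun x : ℝ => x ^ (1/a)) h
        simp only [hk2] at h'
        rw [← Real.rpow_mul (by positivity), mul_one_div, div_self hane, Real.rpow_one,
          Real.mul_rpow h4.le hP.le, ← Real.rpow_mul (by norm_num : (0:ℝ) ≤ 4),
          mul_one_div, div_self hane, Real.rpow_one] at h'
        exact h'
      rw [h2]; field_simp; ring
    · intro h
      have h2 : κ ^ 2 = 4 * P ^ (1/a) := by
        field_simp at h
        exact mul_right_cancel₀ hM.ne' (by linear_combination (-M) * h)
      rw [hk2, h2, Real.mul_rpow (by norm_num) (Real.rpow_nonneg hP.le _),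
        ← Real.rpow_mul hP.le, one_div, inv_mul_cancel₀ hane, Real.rpow_one]
end

section
/- For |j| < 1 and κ > 0, the modified Bessel function r ↦ K_{|j|}(κ r) is square integrable on (0, ∞) with respect to the measure r dr. -/
open Real MeasureTheory Set

/-- Modified Bessel function of the second kind of (real) order `ν`, for positive
argument, defined by the integral representation
`K_ν(x) = ∫₀^∞ exp(−x cosh t) cosh(ν t) dt`. -/
noncomputable def besselK (ν x : ℝ) : ℝ :=
  ∫ t in Set.Ioi (0 : ℝ), Real.exp (-x * Real.cosh t) * Real.cosh (ν * t)

lemma exp_le_two_cosh (t : ℝ) : Real.exp t ≤ 2 * Real.cosh t := by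
  rw [Real.cosh_eq]
  have := (Real.exp_pos (-t)).le
  linarith

lemma cosh_le_exp_of_nonneg {t : ℝ} (ht : 0 ≤ t) : Real.cosh t ≤ Real.exp t := by
  rw [Real.cosh_eq]
  have h : Real.exp (-t) ≤ Real.exp t := Real.exp_le_exp.2 (by linarith)
  linarith

lemma besselK_integrand_int {ν c : ℝ} (hν0 : 0 ≤ ν) (hν1 : ν ≤ 1) (hc : 0 < c) :
    IntegrableOn (fun t => Real.exp (-c * Real.cosh t) * Real.cosh (ν * t)) (Set.Ioi 0) := by
  apply Integrable.mono' (g := fun t => Real.exp (8 / c) * Real.exp (-(1 : ℝ) * t))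
  · exact (exp_neg_integrableOn_Ioi 0 one_pos).const_mul _
  · exact (((Real.continuous_exp.comp ((continuous_const.mul Real.continuous_cosh))).mul
      (Real.continuous_cosh.comp (continuous_const.mul continuous_id))).aestronglyMeasurable)
  · filter_upwards [ae_restrict_mem measurableSet_Ioi] with t ht
    have ht0 : (0 : ℝ) < t := ht
    have h1 : Real.cosh (ν * t) ≤ Real.exp t := by
      refine le_trans ?_ (cosh_le_exp_of_nonneg ht0.le)
      rw [Real.cosh_le_cosh]
      rw [abs_mul, abs_of_nonneg hν0, abs_of_nonneg ht0.le]
      nlinarith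
    have h2 : Real.exp (-c * Real.cosh t) ≤ Real.exp (-c * (Real.exp t / 2)) := by
      apply Real.exp_le_exp.2
      have := exp_le_two_cosh t
      nlinarith
    have habs : |Real.exp (-c * Real.cosh t) * Real.cosh (ν * t)| =
        Real.exp (-c * Real.cosh t) * Real.cosh (ν * t) := by
      exact abs_of_nonneg (by positivity)
    rw [Real.norm_eq_abs, habs]
    calc Real.exp (-c * Real.cosh t) * Real.cosh (ν * t)
        ≤ Real.exp (-c * (Real.exp t / 2)) * Real.exp t := by
          apply mul_le_mul h2 h1 (Real.cosh_pos (ν * t)).le (Real.exp_pos _).le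
      _ = Real.exp (t + -c * (Real.exp t / 2)) := by rw [Real.exp_add]; ring
      _ ≤ Real.exp (8 / c) * Real.exp (-(1 : ℝ) * t) := by
          rw [← Real.exp_add]
          apply Real.exp_le_exp.2
          have hE : (t / 2 + 1) ^ 2 ≤ Real.exp t := by
            have h := Real.add_one_le_exp (t / 2)
            have h2 : Real.exp (t / 2) * Real.exp (t / 2) = Real.exp t := by
              rw [← Real.exp_add]; ring_nf
            nlinarith [Real.exp_pos (t / 2)]
          nlinarith [sq_nonneg (c * t - 8), mul_pos hc hc, Real.exp_pos t,
            mul_le_mul_of_nonneg_left hE (mul_pos hc hc).le,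
            mul_div_cancel₀ (8 : ℝ) hc.ne']

lemma besselK_nonneg (ν x : ℝ) : 0 ≤ besselK ν x := by
  apply setIntegral_nonneg measurableSet_Ioi
  intro t _
  positivity

lemma besselK_stronglyMeasurable (ν : ℝ) : StronglyMeasurable (besselK ν) := by
  apply StronglyMeasurable.integral_prod_right
    (f := fun x t => Real.exp (-x * Real.cosh t) * Real.cosh (ν * t))
  apply Continuous.stronglyMeasurable
  exact ((Real.continuous_exp.comp ((continuous_fst.neg).mul
    (Real.continuous_cosh.comp continuous_snd))).mul
    (Real.continuous_cosh.comp (continuous_const.mul continuous_snd)))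

/-- decay bound: for `c ≤ x`, `K_ν(x) ≤ exp (c - x) * K_ν(c)`. -/
lemma besselK_le_exp {ν c x : ℝ} (hν0 : 0 ≤ ν) (hν1 : ν ≤ 1) (hc : 0 < c) (hx : c ≤ x) :
    besselK ν x ≤ Real.exp (c - x) * besselK ν c := by
  have hx0 : 0 < x := lt_of_lt_of_le hc hx
  have hint1 := besselK_integrand_int hν0 hν1 hx0
  have hint2 := (besselK_integrand_int hν0 hν1 hc).const_mul (Real.exp (c - x))
  calc besselK ν x
      ≤ ∫ t in Set.Ioi (0 : ℝ),
          Real.exp (c - x) * (Real.exp (-c * Real.cosh t) * Real.cosh (ν * t)) := by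
        apply setIntegral_mono_on hint1 hint2 measurableSet_Ioi
        intro t _
        rw [← mul_assoc, ← Real.exp_add]
        apply mul_le_mul_of_nonneg_right _ (Real.cosh_pos (ν * t)).le
        apply Real.exp_le_exp.2
        nlinarith [Real.one_le_cosh t]
    _ = Real.exp (c - x) * besselK ν c := by
        rw [MeasureTheory.integral_const_mul]; rfl

/-- near-zero bound: `K_ν(x) ≤ ((ν+1)/x)^((ν+1)/2) * D` where
`D = ∫₀^∞ exp (-((1-ν)/2) t) dt`. -/
lemma besselK_le_rpow {ν x : ℝ} (hν0 : 0 ≤ ν) (hν1 : ν < 1) (hx : 0 < x) :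
    besselK ν x ≤ ((ν + 1) / x) ^ ((ν + 1) / 2) *
      ∫ t in Set.Ioi (0 : ℝ), Real.exp (-((1 - ν) / 2) * t) := by
  set β : ℝ := (ν + 1) / 2 with hβ
  have hβ0 : 0 < β := by positivity
  have hβν : ν < β := by rw [hβ]; linarith
  have hrate : 0 < (1 - ν) / 2 := by linarith
  have hint1 := besselK_integrand_int hν0 hν1.le hx
  have hint2 := (exp_neg_integrableOn_Ioi 0 hrate).const_mul (((ν + 1) / x) ^ β)
  calc besselK ν x
      ≤ ∫ t in Set.Ioi (0 : ℝ), ((ν + 1) / x) ^ β * Real.exp (-((1 - ν) / 2) * t) := by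
        apply setIntegral_mono_on hint1 hint2 measurableSet_Ioi
        intro t ht
        have ht0 : (0 : ℝ) < t := ht
        -- step 1: cosh (νt) ≤ exp (νt)
        have h1 : Real.cosh (ν * t) ≤ Real.exp (ν * t) :=
          cosh_le_exp_of_nonneg (by positivity)
        -- step 2: exp (-x cosh t) ≤ exp (-(x/2) exp t)
        have h2 : Real.exp (-x * Real.cosh t) ≤ Real.exp (-(x * Real.exp t / 2)) := by
          apply Real.exp_le_exp.2
          have := exp_le_two_cosh t
          nlinarith
        -- step 3: exp (-y) ≤ (β/y)^β with y = x exp t / 2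
        set y : ℝ := x * Real.exp t / 2 with hy
        have hy0 : 0 < y := by positivity
        have key : Real.exp (-y) ≤ (β / y) ^ β := by
          have h3 : Real.exp (-(y / β)) ≤ β / y := by
            rw [Real.exp_neg]
            have h4 : y / β ≤ Real.exp (y / β) := by
              have := Real.add_one_le_exp (y / β); linarith
            have h5 : 0 < y / β := by positivity
            rw [inv_le_comm₀ (Real.exp_pos _) (by positivity)]
            calc (β / y)⁻¹ = y / β := by field_simp
              _ ≤ Real.exp (y / β) := h4
          calc Real.exp (-y) = Real.exp (-(y / β)) ^ β := by
                rw [← Real.exp_mul]; congr 1; field_simp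
            _ ≤ (β / y) ^ β := Real.rpow_le_rpow (Real.exp_pos _).le h3 hβ0.le
        have heq : (β / y) ^ β = ((ν + 1) / x) ^ β * Real.exp (-β * t) := by
          have : β / y = ((ν + 1) / x) * Real.exp (-t) := by
            rw [hy, hβ, Real.exp_neg]
            field_simp
            try ring
          rw [this, Real.mul_rpow (by positivity) (Real.exp_pos _).le, ← Real.exp_mul]
          ring_nf
        calc Real.exp (-x * Real.cosh t) * Real.cosh (ν * t)
            ≤ Real.exp (-y) * Real.exp (ν * t) := by
              apply mul_le_mul h2 h1 (Real.cosh_pos _).le (Real.exp_pos _).le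
          _ ≤ (β / y) ^ β * Real.exp (ν * t) :=
              mul_le_mul_of_nonneg_right key (Real.exp_pos _).le
          _ = ((ν + 1) / x) ^ β * Real.exp (-((1 - ν) / 2) * t) := by
              rw [heq, mul_assoc, ← Real.exp_add]
              congr 2
              rw [hβ]; ring
    _ = ((ν + 1) / x) ^ β * ∫ t in Set.Ioi (0 : ℝ), Real.exp (-((1 - ν) / 2) * t) := by
        rw [MeasureTheory.integral_const_mul]

theorem stmt_12 (j κ : ℝ) (hj : |j| < 1) (hκ : 0 < κ) :
    MeasureTheory.IntegrableOn (fun r : ℝ => (besselK |j| (κ * r)) ^ 2 * r)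
      (Set.Ioi 0) := by
  set ν : ℝ := |j| with hν
  have hν0 : 0 ≤ ν := abs_nonneg j
  have hν1 : ν < 1 := hj
  set β : ℝ := (ν + 1) / 2 with hβ
  have hβ0 : 0 < β := by positivity
  set D : ℝ := ∫ t in Set.Ioi (0 : ℝ), Real.exp (-((1 - ν) / 2) * t) with hD
  have hD0 : 0 ≤ D := by
    apply setIntegral_nonneg measurableSet_Ioi
    intro t _; positivity
  -- measurability of the integrand
  have hmeas : AEStronglyMeasurable (fun r : ℝ => (besselK ν (κ * r)) ^ 2 * r)
      (volume.restrict (Set.Ioi (0 : ℝ))) := by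
    have h1 : Measurable fun r : ℝ => besselK ν (κ * r) :=
      ((besselK_stronglyMeasurable ν).comp_measurable (measurable_const_mul κ)).measurable
    exact ((h1.pow_const 2).mul measurable_id).aestronglyMeasurable
  rw [show Set.Ioi (0 : ℝ) = Set.Ioc 0 1 ∪ Set.Ioi 1 from
    (Set.Ioc_union_Ioi_eq_Ioi zero_le_one).symm]
  apply MeasureTheory.IntegrableOn.union
  · -- near zero
    apply Integrable.mono'
      (g := fun r : ℝ => (((ν + 1) / κ) ^ β * D) ^ 2 * r ^ (-ν))
    · apply Integrable.const_mul
      exact (intervalIntegrable_iff_integrableOn_Ioc_of_le zero_le_one).1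
        (intervalIntegral.intervalIntegrable_rpow' (by linarith))
    · exact hmeas.mono_set Set.Ioc_subset_Ioi_self
    · filter_upwards [ae_restrict_mem measurableSet_Ioc] with r hr
      have hr0 : 0 < r := hr.1
      have hx0 : 0 < κ * r := by positivity
      have hb := besselK_le_rpow hν0 hν1 hx0
      rw [← hD, ← hβ] at hb
      have habs : |(besselK ν (κ * r)) ^ 2 * r| = (besselK ν (κ * r)) ^ 2 * r :=
        abs_of_nonneg (mul_nonneg (sq_nonneg _) hr0.le)
      rw [Real.norm_eq_abs, habs]
      have hsq : (besselK ν (κ * r)) ^ 2 ≤ (((ν + 1) / (κ * r)) ^ β * D) ^ 2 :=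
        pow_le_pow_left₀ (besselK_nonneg ν (κ * r)) hb 2
      have hkey : (((ν + 1) / (κ * r)) ^ β * D) ^ 2 * r
          = (((ν + 1) / κ) ^ β * D) ^ 2 * r ^ (-ν) := by
        have hbase : (ν + 1) / (κ * r) = ((ν + 1) / κ) * r ^ (-(1 : ℝ)) := by
          rw [Real.rpow_neg_one]
          field_simp
        have hbase2 : ((ν + 1) / (κ * r)) ^ β = ((ν + 1) / κ) ^ β * r ^ (-β) := by
          rw [hbase, Real.mul_rpow (by positivity) (by positivity), ← Real.rpow_mul hr0.le]
          norm_num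
        have e1 : r ^ (-β + -β + 1) = (r ^ (-β)) ^ 2 * r := by
          rw [Real.rpow_add hr0, Real.rpow_add hr0, Real.rpow_one, sq]
        have e2 : -β + -β + 1 = -ν := by rw [hβ]; ring
        calc (((ν + 1) / (κ * r)) ^ β * D) ^ 2 * r
            = (((ν + 1) / κ) ^ β * D) ^ 2 * ((r ^ (-β)) ^ 2 * r) := by
              rw [hbase2]; ring
          _ = (((ν + 1) / κ) ^ β * D) ^ 2 * r ^ (-ν) := by rw [← e1, e2]
      calc (besselK ν (κ * r)) ^ 2 * r
          ≤ (((ν + 1) / (κ * r)) ^ β * D) ^ 2 * r :=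
            mul_le_mul_of_nonneg_right hsq hr0.le
        _ = (((ν + 1) / κ) ^ β * D) ^ 2 * r ^ (-ν) := hkey
  · -- tail
    apply Integrable.mono'
      (g := fun r : ℝ => ((besselK ν κ) ^ 2 * Real.exp (2 * κ) / κ) * Real.exp (-κ * r))
    · exact (exp_neg_integrableOn_Ioi 1 hκ).const_mul _
    · exact hmeas.mono_set (Set.Ioi_subset_Ioi zero_le_one)
    · filter_upwards [ae_restrict_mem measurableSet_Ioi] with r hr
      have hr1 : (1 : ℝ) < r := hr
      have hr0 : 0 < r := lt_trans zero_lt_one hr1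
      have hx : κ ≤ κ * r := by nlinarith
      have hb := besselK_le_exp hν0 hν1.le hκ hx
      have habs : |(besselK ν (κ * r)) ^ 2 * r| = (besselK ν (κ * r)) ^ 2 * r :=
        abs_of_nonneg (mul_nonneg (sq_nonneg _) hr0.le)
      rw [Real.norm_eq_abs, habs]
      have hsq : (besselK ν (κ * r)) ^ 2 ≤
          (Real.exp (κ - κ * r)) ^ 2 * (besselK ν κ) ^ 2 := by
        rw [← mul_pow]
        exact pow_le_pow_left₀ (besselK_nonneg ν (κ * r)) hb 2
      have hre : r * Real.exp (-(κ * r)) ≤ 1 / κ := by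
        have h4 : κ * r ≤ Real.exp (κ * r) := by
          have := Real.add_one_le_exp (κ * r); linarith
        rw [Real.exp_neg, mul_comm, inv_mul_le_iff₀ (Real.exp_pos _), mul_one_div,
          le_div_iff₀ hκ]
        calc r * κ = κ * r := mul_comm r κ
          _ ≤ Real.exp (κ * r) := h4
      calc (besselK ν (κ * r)) ^ 2 * r
          ≤ (Real.exp (κ - κ * r)) ^ 2 * (besselK ν κ) ^ 2 * r :=
            mul_le_mul_of_nonneg_right hsq hr0.le
        _ = (besselK ν κ) ^ 2 * Real.exp (2 * κ) *
              (Real.exp (-(κ * r)) * (r * Real.exp (-(κ * r)))) := by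
            have hexp : Real.exp (κ - κ * r) ^ 2
                = Real.exp (2 * κ) * (Real.exp (-(κ * r)) * Real.exp (-(κ * r))) := by
              rw [pow_two, ← Real.exp_add, ← Real.exp_add, ← Real.exp_add]
              congr 1; ring
            rw [hexp]; ring
        _ ≤ (besselK ν κ) ^ 2 * Real.exp (2 * κ) * (Real.exp (-(κ * r)) * (1 / κ)) := by
            apply mul_le_mul_of_nonneg_left
              (mul_le_mul_of_nonneg_left hre (Real.exp_pos _).le)
            positivity
        _ = ((besselK ν κ) ^ 2 * Real.exp (2 * κ) / κ) * Real.exp (-κ * r) := by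
            rw [neg_mul]; ring
end

section
/- Let 0 < |j| < 1, r₀ > 0, λ real with |λ| > |j| sign condition such that (λ+|j|)/(λ−|j|) > 0, and M > 0. The BG bound-state energy E_BG(ν) = −(2/M)[−ν Γ(1+|j|)/Γ(1−|j|)]^{1/|j|} equals the KS bound-state energy E_KS = −(2/(M r₀²))[((λ+|j|)/(λ−|j|)) Γ(1+|j|)/Γ(1−|j|)]^{1/|j|} if and only if ν = −(1/r₀^{2|j|})·(λ+|j|)/(λ−|j|). -/
theorem stmt_17 (j r₀ lam M ν : ℝ) (hj0 : 0 < |j|) (hj : |j| < 1)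
    (hr₀ : 0 < r₀) (hM : 0 < M) (hν : ν < 0)
    (hratio : (lam + |j|) / (lam - |j|) > 0) :
    (-(2 / M) * (-ν * Real.Gamma (1 + |j|) / Real.Gamma (1 - |j|)) ^ (1 / |j|)
      = -(2 / (M * r₀ ^ 2)) *
        (((lam + |j|) / (lam - |j|)) * Real.Gamma (1 + |j|) / Real.Gamma (1 - |j|)) ^ (1 / |j|))
    ↔ ν = -(1 / r₀ ^ (2 * |j|)) * ((lam + |j|) / (lam - |j|)) := by
  set a := |j| with ha
  have ha0 : 0 < a := hj0
  have hG1 : 0 < Real.Gamma (1 + a) := Real.Gamma_pos_of_pos (by linarith)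
  have hG2 : 0 < Real.Gamma (1 - a) := Real.Gamma_pos_of_pos (by linarith)
  set G := Real.Gamma (1 + a) / Real.Gamma (1 - a) with hG
  have hGpos : 0 < G := div_pos hG1 hG2
  set c := (lam + a) / (lam - a) with hc
  have hr2 : (0:ℝ) < r₀ ^ (2 * a) := Real.rpow_pos_of_pos hr₀ _
  have hX : -ν * Real.Gamma (1 + a) / Real.Gamma (1 - a) = -ν * G := by
    rw [hG]; ring
  have hY : c * Real.Gamma (1 + a) / Real.Gamma (1 - a) = c * G := by
    rw [hG]; ring
  have hXpos : 0 < -ν * G := mul_pos (by linarith) hGpos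
  have hYpos : 0 < c * G := mul_pos hratio hGpos
  have hpow : (r₀ ^ (2 * a)) ^ (1 / a) = r₀ ^ 2 := by
    rw [← Real.rpow_mul hr₀.le]
    have : 2 * a * (1 / a) = (2 : ℕ) := by
      push_cast; field_simp
    rw [this, Real.rpow_natCast]
  have key : -(2 / (M * r₀ ^ 2)) * (c * G) ^ (1 / a)
      = -(2 / M) * (c * G / r₀ ^ (2 * a)) ^ (1 / a) := by
    rw [Real.div_rpow hYpos.le hr2.le, hpow]
    have hr₀2 : (r₀ : ℝ) ^ 2 ≠ 0 := by positivity
    field_simp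
  rw [hX, hY, key]
  have hM2 : (-(2 / M) : ℝ) ≠ 0 := by
    have : (0:ℝ) < 2 / M := by positivity
    linarith
  rw [mul_right_inj' hM2,
    Real.rpow_left_inj hXpos.le (by positivity) (by positivity)]
  constructor
  · intro h
    have h2 : -ν * G * r₀ ^ (2 * a) = c * G := by
      field_simp at h
      linear_combination G * h
    have h3 : -ν * r₀ ^ (2 * a) = c := by
      have := mul_right_cancel₀ hGpos.ne' (by linarith [h2] : (-ν * r₀ ^ (2 * a)) * G = c * G)
      exact this
    field_simp
    linarith [h3]
  · intro h
    rw [h]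
    field_simp
end
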